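/- Let A be an m×n matrix, let σ > 0, and let A_{≥σ} denote the truncation of A to singular vectors with singular value at least σ. For any rank parameter k: if the number ℓ of singular values ≥ σ satisfies ℓ ≥ k, then ‖A − A_{≥σ}‖_F ≤ ‖A − A_k‖_F; if ℓ < k, then ‖A − A_{≥σ}‖_F ≤ ‖A − A_k‖_F + √(k)·σ. -/

import Mathlib

open Matrix Finset

noncomputable def frob {m n : ℕ} (A : Matrix (Fin m) (Fin n) ℝ) : ℝ :=
  Real.sqrt (∑ i, ∑ j, (A i j)^2)

lemma frob_sum {m n r : ℕ} (s : Fin r → ℝ) (u : Fin r → Fin m → ℝ) (v : Fin r → Fin n → ℝ)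
    (hu : ∀ i j, ∑ a, u i a * u j a = if i = j then (1:ℝ) else 0)
    (hv : ∀ i j, ∑ a, v i a * v j a = if i = j then (1:ℝ) else 0)
    (T : Finset (Fin r)) :
    frob (∑ i ∈ T, s i • Matrix.vecMulVec (u i) (v i)) = Real.sqrt (∑ i ∈ T, (s i)^2) := by
  unfold frob
  congr 1
  have h1 : ∀ a b, (∑ i ∈ T, s i • Matrix.vecMulVec (u i) (v i)) a b
      = ∑ i ∈ T, s i * (u i a * v i b) := by
    intro a b; simp [Matrix.sum_apply, Matrix.vecMulVec_apply]
  simp_rw [h1, sq, Finset.sum_mul_sum]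
  have key : ∑ a, ∑ b, ∑ i ∈ T, ∑ j ∈ T,
      (s i * (u i a * v i b)) * (s j * (u j a * v j b))
      = ∑ i ∈ T, ∑ j ∈ T, (s i * s j) *
        ((∑ a, u i a * u j a) * (∑ b, v i b * v j b)) := by
    have sw1 : ∀ a : Fin m, ∑ b, ∑ i ∈ T, ∑ j ∈ T,
        (s i * (u i a * v i b)) * (s j * (u j a * v j b))
        = ∑ i ∈ T, ∑ b, ∑ j ∈ T,
        (s i * (u i a * v i b)) * (s j * (u j a * v j b)) := fun a => Finset.sum_comm
    have sw2 : ∀ (a : Fin m) (i : Fin r), ∑ b, ∑ j ∈ T,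
        (s i * (u i a * v i b)) * (s j * (u j a * v j b))
        = ∑ j ∈ T, ∑ b,
        (s i * (u i a * v i b)) * (s j * (u j a * v j b)) := fun a i => Finset.sum_comm
    simp_rw [sw1, sw2]
    rw [Finset.sum_comm]
    refine Finset.sum_congr rfl fun i _ => ?_
    rw [Finset.sum_comm]
    refine Finset.sum_congr rfl fun j _ => ?_
    rw [Finset.sum_comm]
    simp only [Finset.mul_sum, Finset.sum_mul]
    refine Finset.sum_congr rfl fun b _ => Finset.sum_congr rfl fun a _ => by ring
  rw [key]
  rw [Finset.sum_congr rfl fun i _ => Finset.sum_congr rfl fun j (_ : j ∈ T) => by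
    rw [hu i j, hv i j]]
  refine Finset.sum_congr rfl fun i hi => ?_
  rw [Finset.sum_eq_single i (fun j _ hji => by simp [hji, Ne.symm hji]) (fun h => absurd hi h)]
  simp [sq]


lemma card_filter_lt {r : ℕ} (c : ℕ) :
    (Finset.univ.filter fun j : Fin r => (j:ℕ) < c).card ≤ c := by
  have h := Finset.card_le_card_of_injOn (s := Finset.univ.filter fun j : Fin r => (j:ℕ) < c)
    (t := Finset.range c) (fun j : Fin r => (j:ℕ))
    (fun j hj => by
      simp only [Finset.mem_coe, Finset.mem_filter] at hj
      exact Finset.mem_range.mpr hj.2)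
    (fun a _ b _ h => Fin.val_injective h)
  rwa [Finset.card_range] at h

lemma sqrt_add_le' (x y : ℝ) (hx : 0 ≤ x) (hy : 0 ≤ y) :
    Real.sqrt (x + y) ≤ Real.sqrt x + Real.sqrt y := by
  have h := Real.sqrt_le_sqrt (show x + y ≤ (Real.sqrt x + Real.sqrt y)^2 by
    nlinarith [Real.sq_sqrt hx, Real.sq_sqrt hy, Real.sqrt_nonneg x, Real.sqrt_nonneg y])
  rwa [Real.sqrt_sq (by positivity)] at h

theorem stmt6 {m n r : ℕ} (A : Matrix (Fin m) (Fin n) ℝ)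
    (s : Fin r → ℝ) (u : Fin r → Fin m → ℝ) (v : Fin r → Fin n → ℝ)
    (hs0 : ∀ i, 0 ≤ s i)
    (hmono : ∀ i j : Fin r, i ≤ j → s j ≤ s i)
    (hu : ∀ i j, ∑ a, u i a * u j a = if i = j then (1:ℝ) else 0)
    (hv : ∀ i j, ∑ a, v i a * v j a = if i = j then (1:ℝ) else 0)
    (hA : A = ∑ i, s i • Matrix.vecMulVec (u i) (v i))
    (σ : ℝ) (hσ : 0 < σ) (k : ℕ)
    (Ak Aσ : Matrix (Fin m) (Fin n) ℝ)
    (hAk : Ak = ∑ i ∈ Finset.univ.filter (fun i : Fin r => (i : ℕ) < k),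
      s i • Matrix.vecMulVec (u i) (v i))
    (hAσ : Aσ = ∑ i ∈ Finset.univ.filter (fun i : Fin r => σ ≤ s i),
      s i • Matrix.vecMulVec (u i) (v i))
    (ℓ : ℕ) (hℓ : ℓ = (Finset.univ.filter (fun i : Fin r => σ ≤ s i)).card) :
    (k ≤ ℓ → frob (A - Aσ) ≤ frob (A - Ak)) ∧
    (ℓ < k → frob (A - Aσ) ≤ frob (A - Ak) + Real.sqrt k * σ) := by
  set Tk : Finset (Fin r) := Finset.univ.filter (fun i : Fin r => ¬ (i : ℕ) < k) with hTk
  set Tσ : Finset (Fin r) := Finset.univ.filter (fun i : Fin r => ¬ σ ≤ s i) with hTσ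
  have hdk : A - Ak = ∑ i ∈ Tk, s i • Matrix.vecMulVec (u i) (v i) := by
    rw [hA, hAk, ← Finset.sum_filter_add_sum_filter_not Finset.univ
      (fun i : Fin r => (i : ℕ) < k) (fun i => s i • Matrix.vecMulVec (u i) (v i))]
    abel
  have hdσ : A - Aσ = ∑ i ∈ Tσ, s i • Matrix.vecMulVec (u i) (v i) := by
    rw [hA, hAσ, ← Finset.sum_filter_add_sum_filter_not Finset.univ
      (fun i : Fin r => σ ≤ s i) (fun i => s i • Matrix.vecMulVec (u i) (v i))]
    abel
  rw [hdk, hdσ, frob_sum s u v hu hv, frob_sum s u v hu hv]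
  constructor
  · intro hkl
    apply Real.sqrt_le_sqrt
    apply Finset.sum_le_sum_of_subset_of_nonneg
    · intro i hi
      simp only [hTσ, Finset.mem_filter, Finset.mem_univ, true_and, not_le] at hi
      simp only [hTk, Finset.mem_filter, Finset.mem_univ, true_and, not_lt]
      by_contra hik
      push_neg at hik
      -- i < k but s i < σ; then the σ-filter set has card ≤ i < k ≤ ℓ, contradiction
      have hsub : Finset.univ.filter (fun j : Fin r => σ ≤ s j) ⊆
          Finset.univ.filter (fun j : Fin r => (j:ℕ) < (i:ℕ)) := by
        intro j hj
        simp only [Finset.mem_filter, Finset.mem_univ, true_and] at hj ⊢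
        by_contra h
        push_neg at h
        exact absurd hj (not_le.mpr (lt_of_le_of_lt (hmono i j (Fin.le_def.mpr h)) hi))
      have := (hℓ ▸ Finset.card_le_card hsub).trans (card_filter_lt (i:ℕ))
      omega
    · intro i _ _; positivity
  · intro hlk
    have hsplit := Finset.sum_filter_add_sum_filter_not Tσ
      (fun i : Fin r => (i : ℕ) < k) (fun i => (s i)^2)
    have h1 : ∑ i ∈ Tσ.filter (fun i : Fin r => (i : ℕ) < k), (s i)^2 ≤ (k:ℝ) * σ^2 := by
      calc ∑ i ∈ Tσ.filter (fun i : Fin r => (i : ℕ) < k), (s i)^2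
          ≤ ∑ _i ∈ Tσ.filter (fun i : Fin r => (i : ℕ) < k), σ^2 := by
            apply Finset.sum_le_sum
            intro i hi
            simp only [hTσ, Finset.mem_filter, Finset.mem_univ, true_and, not_le] at hi
            have := hi.1
            nlinarith [hs0 i]
        _ = (Tσ.filter (fun i : Fin r => (i : ℕ) < k)).card * σ^2 := by
            rw [Finset.sum_const, nsmul_eq_mul]
        _ ≤ (k:ℝ) * σ^2 := by
            have hc : (Tσ.filter (fun i : Fin r => (i : ℕ) < k)).card ≤ k := by
              refine (Finset.card_le_card ?_).trans (card_filter_lt k)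
              intro j hj
              simp only [Finset.mem_filter] at hj ⊢
              exact ⟨Finset.mem_univ j, hj.2⟩
            have : ((Tσ.filter (fun i : Fin r => (i : ℕ) < k)).card : ℝ) ≤ (k:ℝ) :=
              Nat.cast_le.mpr hc
            nlinarith
    have h2 : ∑ i ∈ Tσ.filter (fun i : Fin r => ¬ (i : ℕ) < k), (s i)^2 ≤
        ∑ i ∈ Tk, (s i)^2 := by
      apply Finset.sum_le_sum_of_subset_of_nonneg
      · intro j hj
        simp only [hTσ, hTk, Finset.mem_filter, Finset.mem_univ, true_and] at hj ⊢
        exact hj.2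
      · intro i _ _; positivity
    have hsum : ∑ i ∈ Tσ, (s i)^2 ≤ ∑ i ∈ Tk, (s i)^2 + (k:ℝ) * σ^2 := by
      rw [← hsplit]; linarith
    calc Real.sqrt (∑ i ∈ Tσ, (s i)^2) ≤ Real.sqrt (∑ i ∈ Tk, (s i)^2 + (k:ℝ) * σ^2) :=
          Real.sqrt_le_sqrt hsum
      _ ≤ Real.sqrt (∑ i ∈ Tk, (s i)^2) + Real.sqrt ((k:ℝ) * σ^2) := by
          apply sqrt_add_le' <;> positivity
      _ = Real.sqrt (∑ i ∈ Tk, (s i)^2) + Real.sqrt k * σ := by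
          rw [Real.sqrt_mul (by positivity), Real.sqrt_sq hσ.le]
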